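/- (Self-specialization of AMI under the permutation model.) Let X be a finite set and let C and T be partitions of X. Write E₁ = E_{C′~perm(C)}[I(C′, T)] for the one-sided expected mutual information, E₂ = E_{C′~perm(C), T′~perm(T)}[I(C′, T′)] for the two-sided expected mutual information (the uniform average over all pairs), and M = √(H(C)·H(T)). If M ≠ E₁ and M ≠ E₂, then the one-sided and two-sided adjusted mutual informations coincide: (I(C,T) − E₁)/(M − E₁) = (I(C,T) − E₂)/(M − E₂). -/

import Mathlib

open Finset Real

variable {X : Type*} [Fintype X] [DecidableEq X]

/-- A finite family of finsets of `X` is a partition of `X` if its blocks are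
nonempty, pairwise disjoint, and cover `X`. -/
def IsPartition (P : Finset (Finset X)) : Prop :=
  (∀ B ∈ P, B.Nonempty) ∧
  (∀ B ∈ P, ∀ D ∈ P, B ≠ D → Disjoint B D) ∧
  (∀ x : X, ∃ B ∈ P, x ∈ B)

instance : DecidablePred (IsPartition (X := X)) := fun _ => by
  unfold IsPartition; infer_instance

/-- The shape of a partition: the multiset of its block sizes. -/
def shape (P : Finset (Finset X)) : Multiset ℕ := P.val.map Finset.card

/-- The image `σ·P` of a partition under a permutation `σ` of `X`. -/
def pmap (σ : X ≃ X) (P : Finset (Finset X)) : Finset (Finset X) :=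
  P.image (fun B => B.image σ)

/-- Entropy of a partition: `H(C) = -∑_{B ∈ C} (|B|/N) log (|B|/N)`. -/
noncomputable def entropy (C : Finset (Finset X)) : ℝ :=
  -∑ B ∈ C, ((B.card : ℝ) / (Fintype.card X : ℝ)) *
    Real.log ((B.card : ℝ) / (Fintype.card X : ℝ))

/-- Mutual information of two partitions:
`I(C,T) = ∑_{B ∈ C} ∑_{D ∈ T} (|B∩D|/N) log (N |B∩D| / (|B| |D|))`
(summands with `B ∩ D = ∅` vanish since the first factor is `0`). -/
noncomputable def MI (C T : Finset (Finset X)) : ℝ :=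
  ∑ B ∈ C, ∑ D ∈ T, (((B ∩ D).card : ℝ) / (Fintype.card X : ℝ)) *
    Real.log ((Fintype.card X : ℝ) * ((B ∩ D).card : ℝ) / ((B.card : ℝ) * (D.card : ℝ)))

/-- The permutation random model `perm(C)`: all partitions of `X` with the same
shape as `C`. -/
def permModel (C : Finset (Finset X)) : Finset (Finset (Finset X)) :=
  Finset.univ.filter (fun P => IsPartition P ∧ shape P = shape C)

/-- The all-partitions random model `all(X)`: all partitions of `X`. -/
def allModel (X : Type*) [Fintype X] [DecidableEq X] : Finset (Finset (Finset X)) :=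
  Finset.univ.filter (fun P => IsPartition P)

/-- Uniform average of `f` over a finite set `s`. -/
noncomputable def avg {α : Type*} (s : Finset α) (f : α → ℝ) : ℝ :=
  (∑ a ∈ s, f a) / s.card

set_option linter.unusedSectionVars false

lemma mem_msup {p : Multiset (Finset X)} {x : X} :
    x ∈ p.sup ↔ ∃ B ∈ p, x ∈ B := by
  induction p using Multiset.induction_on with
  | empty => simp
  | cons B p ih =>
    simp only [Multiset.sup_cons, Finset.sup_eq_union, Finset.mem_union, ih, Multiset.mem_cons]
    constructor
    · rintro (h | ⟨B', hB', hx⟩)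
      · exact ⟨B, Or.inl rfl, h⟩
      · exact ⟨B', Or.inr hB', hx⟩
    · rintro ⟨B', (rfl | hB'), hx⟩
      · exact Or.inl hx
      · exact Or.inr ⟨B', hB', hx⟩

lemma exists_bijOn_of_rel {p q : Multiset (Finset X)}
    (hrel : Multiset.Rel (fun B D => B.card = D.card) p q) :
    p.Nodup → q.Nodup →
    (∀ B ∈ p, ∀ B' ∈ p, B ≠ B' → Disjoint B B') →
    (∀ D ∈ q, ∀ D' ∈ q, D ≠ D' → Disjoint D D') →
    ∃ f : X → X, Set.BijOn f ↑(p.sup) ↑(q.sup) ∧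
        p.map (fun B => B.image f) = q := by
  induction hrel with
  | zero =>
    intro _ _ _ _
    exact ⟨id, by simp, by simp⟩
  | @cons B D p' q' hBD hrel' ih =>
    intro hnp hnq hdp hdq
    obtain ⟨hBp', hnp'⟩ := Multiset.nodup_cons.1 hnp
    obtain ⟨hDq', hnq'⟩ := Multiset.nodup_cons.1 hnq
    obtain ⟨f', hbij', hmap'⟩ := ih hnp' hnq'
      (fun B1 h1 B2 h2 => hdp B1 (Multiset.mem_cons_of_mem h1) B2 (Multiset.mem_cons_of_mem h2))
      (fun D1 h1 D2 h2 => hdq D1 (Multiset.mem_cons_of_mem h1) D2 (Multiset.mem_cons_of_mem h2))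
    let e : (B : Type _) ≃ D := Finset.equivOfCardEq hBD
    set f : X → X := fun x => if h : x ∈ B then ((e ⟨x, h⟩ : D) : X) else f' x with hf
    have hfB : ∀ (x : X) (h : x ∈ B), f x = ((e ⟨x, h⟩ : D) : X) := fun x h => dif_pos h
    have hfBmem : ∀ x ∈ B, f x ∈ D := fun x h => by rw [hfB x h]; exact (e ⟨x, h⟩).2
    have hfn : ∀ x, x ∉ B → f x = f' x := fun x h => dif_neg h
    have hBdisj : ∀ x ∈ p'.sup, x ∉ B := by
      intro x hx hxB
      obtain ⟨B', hB', hxB'⟩ := mem_msup.1 hx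
      have hne : B ≠ B' := by rintro rfl; exact hBp' hB'
      exact Finset.disjoint_left.1
        (hdp B (Multiset.mem_cons_self _ _) B' (Multiset.mem_cons_of_mem hB') hne) hxB hxB'
    have hDdisj : ∀ y ∈ q'.sup, y ∉ D := by
      intro y hy hyD
      obtain ⟨D', hD', hyD'⟩ := mem_msup.1 hy
      have hne : D ≠ D' := by rintro rfl; exact hDq' hD'
      exact Finset.disjoint_left.1
        (hdq D (Multiset.mem_cons_self _ _) D' (Multiset.mem_cons_of_mem hD') hne) hyD hyD'
    have hinjB : Set.InjOn f ↑B := by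
      intro x hx y hy hxy
      rw [hfB x hx, hfB y hy] at hxy
      have := e.injective (Subtype.ext hxy)
      exact Subtype.mk_eq_mk.1 this
    refine ⟨f, ?_, ?_⟩
    · rw [Multiset.sup_cons, Multiset.sup_cons]
      rw [show (B ⊔ p'.sup : Finset X) = B ∪ p'.sup from rfl,
        show (D ⊔ q'.sup : Finset X) = D ∪ q'.sup from rfl, Finset.coe_union, Finset.coe_union]
      refine ⟨?_, ?_, ?_⟩
      · intro x hx
        by_cases hxB : x ∈ B
        · exact Or.inl (hfBmem x hxB)
        · have hx' : x ∈ (↑(p'.sup) : Set X) := by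
            rcases hx with h | h
            · exact absurd h hxB
            · exact h
          rw [hfn x hxB]
          exact Or.inr (hbij'.mapsTo hx')
      · intro x hx y hy hxy
        by_cases hxB : x ∈ B <;> by_cases hyB : y ∈ B
        · exact hinjB hxB hyB hxy
        · exfalso
          have hy' : y ∈ (↑(p'.sup) : Set X) := by
            rcases hy with h | h
            · exact absurd h hyB
            · exact h
          have h1 : f x ∈ D := hfBmem x hxB
          have h2 : f y ∈ q'.sup := by rw [hfn y hyB]; exact hbij'.mapsTo hy'
          rw [hxy] at h1
          exact hDdisj _ h2 h1
        · exfalso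
          have hx' : x ∈ (↑(p'.sup) : Set X) := by
            rcases hx with h | h
            · exact absurd h hxB
            · exact h
          have h1 : f y ∈ D := hfBmem y hyB
          have h2 : f x ∈ q'.sup := by rw [hfn x hxB]; exact hbij'.mapsTo hx'
          rw [← hxy] at h1
          exact hDdisj _ h2 h1
        · have hx' : x ∈ (↑(p'.sup) : Set X) := by
            rcases hx with h | h
            · exact absurd h hxB
            · exact h
          have hy' : y ∈ (↑(p'.sup) : Set X) := by
            rcases hy with h | h
            · exact absurd h hyB
            · exact h
          rw [hfn x hxB, hfn y hyB] at hxy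
          exact hbij'.injOn hx' hy' hxy
      · intro y hy
        rcases hy with hyD | hyS
        · obtain ⟨b, hb⟩ := e.surjective ⟨y, hyD⟩
          refine ⟨(b : X), Or.inl (Finset.mem_coe.2 b.2), ?_⟩
          have h1 : f (b : X) = ((e ⟨(b : X), b.2⟩ : D) : X) := dif_pos b.2
          rw [h1, Subtype.coe_eta, hb]
        · obtain ⟨x, hx, hfx⟩ := hbij'.surjOn hyS
          have hxB : x ∉ B := hBdisj x (Finset.mem_coe.1 hx)
          exact ⟨x, Or.inr hx, by rw [hfn x hxB, hfx]⟩
    · rw [Multiset.map_cons]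
      have h1 : B.image f = D := by
        apply Finset.eq_of_subset_of_card_le
        · intro y hy
          obtain ⟨x, hx, rfl⟩ := Finset.mem_image.1 hy
          exact hfBmem x hx
        · rw [Finset.card_image_of_injOn hinjB, hBD]
      have h2 : p'.map (fun B' => B'.image f) = q' := by
        rw [← hmap']
        apply Multiset.map_congr rfl
        intro B' hB'
        apply Finset.image_congr
        intro x hx
        refine hfn x fun hxB => ?_
        have hne : B ≠ B' := by rintro rfl; exact hBp' hB'
        exact Finset.disjoint_left.1
          (hdp B (Multiset.mem_cons_self _ _) B' (Multiset.mem_cons_of_mem hB') hne) hxB hx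
      rw [h1, h2]

lemma pmap_val (σ : X ≃ X) (P : Finset (Finset X)) :
    (pmap σ P).val = P.val.map (fun B => B.image σ) := by
  have hinj : Function.Injective (fun B : Finset X => B.image σ) :=
    Finset.image_injective σ.injective
  rw [pmap, Finset.image_val, Multiset.dedup_eq_self.mpr (P.nodup.map hinj)]

lemma shape_pmap (σ : X ≃ X) (P : Finset (Finset X)) : shape (pmap σ P) = shape P := by
  rw [shape, shape, pmap_val, Multiset.map_map]
  exact Multiset.map_congr rfl fun B _ => Finset.card_image_of_injective _ σ.injective

lemma isPartition_pmap (σ : X ≃ X) {P : Finset (Finset X)} (h : IsPartition P) :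
    IsPartition (pmap σ P) := by
  obtain ⟨h1, h2, h3⟩ := h
  refine ⟨?_, ?_, ?_⟩
  · intro B' hB'
    obtain ⟨B, hB, rfl⟩ := Finset.mem_image.1 hB'
    exact (h1 B hB).image σ
  · intro B' hB' D' hD' hne
    obtain ⟨B, hB, rfl⟩ := Finset.mem_image.1 hB'
    obtain ⟨D, hD, rfl⟩ := Finset.mem_image.1 hD'
    exact (Finset.disjoint_image σ.injective).2 (h2 B hB D hD (fun h => hne (by rw [h])))
  · intro x
    obtain ⟨B, hB, hx⟩ := h3 (σ.symm x)
    exact ⟨B.image σ, Finset.mem_image_of_mem _ hB,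
      Finset.mem_image.2 ⟨σ.symm x, hx, σ.apply_symm_apply x⟩⟩

lemma pmap_symm_pmap (σ : X ≃ X) (P : Finset (Finset X)) : pmap σ.symm (pmap σ P) = P := by
  rw [pmap, pmap, Finset.image_image]
  have h : ((fun B : Finset X => B.image σ.symm) ∘ fun B : Finset X => B.image σ) = id := by
    funext B
    simp [Finset.image_image]
  rw [h, Finset.image_id]

lemma pmap_pmap_symm (σ : X ≃ X) (P : Finset (Finset X)) : pmap σ (pmap σ.symm P) = P := by
  have := pmap_symm_pmap σ.symm P
  simpa using this

lemma exists_pmap_eq {P Q : Finset (Finset X)} (hP : IsPartition P) (hQ : IsPartition Q)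
    (h : shape P = shape Q) : ∃ σ : X ≃ X, pmap σ P = Q := by
  have hrel : Multiset.Rel (fun B D => B.card = D.card) P.val Q.val :=
    Multiset.rel_map.1 (Multiset.rel_eq.2 h)
  obtain ⟨f, hbij, hmap⟩ := exists_bijOn_of_rel hrel P.nodup Q.nodup
    (fun B h1 B' h2 hne => hP.2.1 B h1 B' h2 hne)
    (fun D h1 D' h2 hne => hQ.2.1 D h1 D' h2 hne)
  have hsupP : P.val.sup = Finset.univ :=
    Finset.eq_univ_iff_forall.mpr fun x => mem_msup.mpr (hP.2.2 x)
  have hsupQ : Q.val.sup = Finset.univ :=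
    Finset.eq_univ_iff_forall.mpr fun x => mem_msup.mpr (hQ.2.2 x)
  rw [hsupP, hsupQ, Finset.coe_univ] at hbij
  have hfb : Function.Bijective f := Set.bijOn_univ.mp hbij
  refine ⟨Equiv.ofBijective f hfb, ?_⟩
  apply Finset.eq_of_veq
  rw [pmap_val]
  exact hmap

lemma MI_pmap (σ : X ≃ X) (C T : Finset (Finset X)) : MI (pmap σ C) (pmap σ T) = MI C T := by
  rw [MI, MI, pmap, pmap]
  rw [Finset.sum_image (fun x _ y _ h => Finset.image_injective σ.injective h)]
  refine Finset.sum_congr rfl fun B _ => ?_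
  rw [Finset.sum_image (fun x _ y _ h => Finset.image_injective σ.injective h)]
  refine Finset.sum_congr rfl fun D _ => ?_
  rw [← Finset.image_inter _ _ σ.injective,
      Finset.card_image_of_injective _ σ.injective,
      Finset.card_image_of_injective _ σ.injective,
      Finset.card_image_of_injective _ σ.injective]

lemma mem_permModel {P C : Finset (Finset X)} :
    P ∈ permModel C ↔ IsPartition P ∧ shape P = shape C := by
  simp [permModel]

lemma pmap_mem_permModel (σ : X ≃ X) {P C : Finset (Finset X)} (h : P ∈ permModel C) :
    pmap σ P ∈ permModel C := by
  obtain ⟨h1, h2⟩ := mem_permModel.1 h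
  exact mem_permModel.2 ⟨isPartition_pmap σ h1, (shape_pmap σ P).trans h2⟩

lemma sum_MI_eq (C T Q : Finset (Finset X)) (hT : IsPartition T) (hQmem : Q ∈ permModel T) :
    ∑ P ∈ permModel C, MI P Q = ∑ P ∈ permModel C, MI P T := by
  obtain ⟨hQ, hsh⟩ := mem_permModel.1 hQmem
  obtain ⟨σ, hσ⟩ := exists_pmap_eq hT hQ hsh.symm
  refine Finset.sum_nbij' (i := fun P => pmap σ.symm P) (j := fun P => pmap σ P)
    (fun P hP => pmap_mem_permModel _ hP) (fun P hP => pmap_mem_permModel _ hP)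
    (fun P _ => pmap_pmap_symm σ P) (fun P _ => pmap_symm_pmap σ P) ?_
  intro P _
  calc MI P Q = MI (pmap σ (pmap σ.symm P)) (pmap σ T) := by rw [pmap_pmap_symm, hσ]
    _ = MI (pmap σ.symm P) T := MI_pmap σ _ _

theorem stmt6 (hN : 1 ≤ Fintype.card X)
    (C T : Finset (Finset X)) (hC : IsPartition C) (hT : IsPartition T)
    (hM1 : Real.sqrt (entropy C * entropy T) ≠ avg (permModel C) (fun Cp => MI Cp T))
    (hM2 : Real.sqrt (entropy C * entropy T) ≠
      avg ((permModel C) ×ˢ (permModel T)) (fun p => MI p.1 p.2)) :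
    (MI C T - avg (permModel C) (fun Cp => MI Cp T)) /
        (Real.sqrt (entropy C * entropy T) - avg (permModel C) (fun Cp => MI Cp T)) =
      (MI C T - avg ((permModel C) ×ˢ (permModel T)) (fun p => MI p.1 p.2)) /
        (Real.sqrt (entropy C * entropy T) -
          avg ((permModel C) ×ˢ (permModel T)) (fun p => MI p.1 p.2)) := by
  suffices h : avg ((permModel C) ×ˢ (permModel T)) (fun p => MI p.1 p.2)
      = avg (permModel C) (fun Cp => MI Cp T) by rw [h]
  have hTmem : T ∈ permModel T := mem_permModel.2 ⟨hT, rfl⟩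
  have hTcard : ((permModel T).card : ℝ) ≠ 0 := by
    exact_mod_cast (Finset.card_pos.mpr ⟨T, hTmem⟩).ne'
  rw [avg, avg, Finset.sum_product_right]
  have hsum : ∀ Q ∈ permModel T,
      (∑ P ∈ permModel C, MI P Q) = ∑ P ∈ permModel C, MI P T :=
    fun Q hQ => sum_MI_eq C T Q hT hQ
  rw [Finset.sum_congr rfl hsum, Finset.sum_const, Finset.card_product, nsmul_eq_mul,
    Nat.cast_mul]
  rw [mul_comm ((permModel T).card : ℝ)]
  exact mul_div_mul_right _ _ hTcard
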